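/- Let M, N be traceless Hermitian d×d complex matrices and let V₁,…,V_k ∈ ℂ^{d×m} have entries drawn i.i.d. from the complex Gaussian N(0, 1/d). Then E[⟨M_{V₁,…,V_k}, N_{V₁,…,V_k}⟩] = (k(k−1)m/d²)·⟨M,N⟩. -/

import Mathlib

open Matrix MeasureTheory ProbabilityTheory BigOperators

/-- Hilbert–Schmidt inner product ⟨A,B⟩ = tr(A†B). -/
noncomputable def hsInner {n m' : Type*} [Fintype n] [Fintype m'] (A B : Matrix n m' ℂ) : ℂ :=
  (Aᴴ * B).trace

/-- Frobenius norm of a matrix. -/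
noncomputable def frobNorm {n m : Type*} [Fintype n] [Fintype m] (A : Matrix n m ℂ) : ℝ :=
  Real.sqrt (∑ i, ∑ j, ‖A i j‖ ^ 2)

/-- `M_{V₁,…,V_k}` : the k×k matrix with (i,j) entry `tr(Vᵢᴴ M V_j)` off the diagonal
and `0` on the diagonal. -/
noncomputable def proj {d m k : ℕ} (V : Fin k → Matrix (Fin d) (Fin m) ℂ)
    (M : Matrix (Fin d) (Fin d) ℂ) : Matrix (Fin k) (Fin k) ℂ := fun i j =>
  if i = j then 0 else ((V i)ᴴ * M * V j).trace

/-- The matrix of (real) Gaussian entries `g (i, a, c)` forming `Vᵢ`. -/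
noncomputable def gmat {d m k : ℕ} {Ω : Type*} (g : Fin k × Fin d × Fin m → Ω → ℝ)
    (i : Fin k) (ω : Ω) : Matrix (Fin d) (Fin m) ℂ := fun a c => (g (i, a, c) ω : ℂ)

section AuxGauss
open Real MeasureTheory Filter ProbabilityTheory
open scoped NNReal ENNReal

lemma sq_mul_exp_int {b : ℝ} (hb : 0 < b) :
    ∫ x : ℝ, x ^ 2 * Real.exp (-b * x ^ 2) = (2 * b)⁻¹ * Real.sqrt (π / b) := by
  have hb2 : (2 * b) ≠ 0 := by positivity
  set f : ℝ → ℝ := fun x => -(2*b)⁻¹ * (x * Real.exp (-b * x^2)) with hf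
  set f' : ℝ → ℝ := fun x => x^2 * Real.exp (-b*x^2) - (2*b)⁻¹ * Real.exp (-b*x^2) with hf'
  have hderiv : ∀ x : ℝ, HasDerivAt f (f' x) x := by
    intro x
    have h1 : HasDerivAt (fun x : ℝ => -b * x^2) (-b * (2*x)) x := by
      simpa using ((hasDerivAt_pow 2 x)).const_mul (-b)
    have h3 := ((hasDerivAt_id x).mul h1.exp).const_mul (-(2*b)⁻¹)
    refine h3.congr_deriv ?_
    symm
    simp only [hf', id_eq]
    field_simp
    ring
  have hx2 : Integrable (fun x : ℝ => x ^ 2 * Real.exp (-b * x ^ 2)) := by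
    have := integrable_rpow_mul_exp_neg_mul_sq hb (s := 2) (by norm_num)
    simpa [Real.rpow_two] using this
  have hexp : Integrable (fun x : ℝ => Real.exp (-b * x ^ 2)) := integrable_exp_neg_mul_sq hb
  have hf'int : Integrable f' := hx2.sub (hexp.const_mul _)
  have htend : Tendsto (fun x : ℝ => x * Real.exp (-b * x^2)) (cocompact ℝ) (nhds 0) := by
    have h := tendsto_rpow_abs_mul_exp_neg_mul_sq_cocompact hb 1
    simp only [Real.rpow_one] at h
    apply squeeze_zero_norm _ h
    intro x
    rw [norm_mul, Real.norm_eq_abs, Real.norm_eq_abs, abs_of_nonneg (Real.exp_pos _).le]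
  have hle1 : atTop ≤ cocompact ℝ := by rw [cocompact_eq_atBot_atTop]; exact le_sup_right
  have hle2 : atBot ≤ cocompact ℝ := by rw [cocompact_eq_atBot_atTop]; exact le_sup_left
  have htop : Tendsto f atTop (nhds 0) := by
    have := ((htend.mono_left hle1).const_mul (-(2*b)⁻¹))
    rw [mul_zero] at this
    exact this
  have hbot : Tendsto f atBot (nhds 0) := by
    have := ((htend.mono_left hle2).const_mul (-(2*b)⁻¹))
    rw [mul_zero] at this
    exact this
  have h0 : f 0 = 0 := by simp [hf]
  have hIoi : ∫ x in Set.Ioi (0:ℝ), f' x = 0 - f 0 :=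
    integral_Ioi_of_hasDerivAt_of_tendsto' (fun x _ => hderiv x) hf'int.integrableOn htop
  have hIic : ∫ x in Set.Iic (0:ℝ), f' x = f 0 - 0 :=
    integral_Iic_of_hasDerivAt_of_tendsto' (fun x _ => hderiv x) hf'int.integrableOn hbot
  have hzero : ∫ x : ℝ, f' x = 0 := by
    rw [← intervalIntegral.integral_Iic_add_Ioi hf'int.integrableOn hf'int.integrableOn, hIoi, hIic]
    ring
  have : (fun x : ℝ => x ^ 2 * Real.exp (-b * x ^ 2))
      = fun x => f' x + (2*b)⁻¹ * Real.exp (-b * x^2) := by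
    funext x; simp only [hf']; ring
  rw [this, integral_add hf'int (hexp.const_mul _), hzero, integral_const_mul,
    integral_gaussian, zero_add]


lemma mul_exp_int {b : ℝ} (hb : 0 < b) : ∫ x : ℝ, x * Real.exp (-b * x ^ 2) = 0 := by
  have hb2 : (2 * b) ≠ 0 := by positivity
  set f : ℝ → ℝ := fun x => -(2*b)⁻¹ * Real.exp (-b * x^2) with hf
  have hderiv : ∀ x : ℝ, HasDerivAt f (x * Real.exp (-b * x ^ 2)) x := by
    intro x
    have h1 : HasDerivAt (fun x : ℝ => -b * x^2) (-b * (2*x)) x := by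
      simpa using ((hasDerivAt_pow 2 x)).const_mul (-b)
    have h3 := h1.exp.const_mul (-(2*b)⁻¹)
    refine h3.congr_deriv ?_
    symm
    field_simp
  have hint : Integrable (fun x : ℝ => x * Real.exp (-b * x ^ 2)) :=
    integrable_mul_exp_neg_mul_sq hb
  have htend : Tendsto (fun x : ℝ => Real.exp (-b * x^2)) (cocompact ℝ) (nhds 0) := by
    have h := tendsto_rpow_abs_mul_exp_neg_mul_sq_cocompact hb 0
    simp only [Real.rpow_zero, one_mul] at h
    exact h
  have hle1 : atTop ≤ cocompact ℝ := by rw [cocompact_eq_atBot_atTop]; exact le_sup_right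
  have hle2 : atBot ≤ cocompact ℝ := by rw [cocompact_eq_atBot_atTop]; exact le_sup_left
  have htop : Tendsto f atTop (nhds 0) := by
    have := ((htend.mono_left hle1).const_mul (-(2*b)⁻¹)); rw [mul_zero] at this; exact this
  have hbot : Tendsto f atBot (nhds 0) := by
    have := ((htend.mono_left hle2).const_mul (-(2*b)⁻¹)); rw [mul_zero] at this; exact this
  have hIoi : ∫ x in Set.Ioi (0:ℝ), x * Real.exp (-b * x ^ 2) = 0 - f 0 :=
    integral_Ioi_of_hasDerivAt_of_tendsto' (fun x _ => hderiv x) hint.integrableOn htop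
  have hIic : ∫ x in Set.Iic (0:ℝ), x * Real.exp (-b * x ^ 2) = f 0 - 0 :=
    integral_Iic_of_hasDerivAt_of_tendsto' (fun x _ => hderiv x) hint.integrableOn hbot
  rw [← intervalIntegral.integral_Iic_add_Ioi hint.integrableOn hint.integrableOn, hIoi, hIic]
  ring

lemma integrable_dirac0 {f : ℝ → ℝ} (hf : Measurable f) : Integrable f (Measure.dirac 0) :=
  ⟨hf.aestronglyMeasurable, by
    rw [HasFiniteIntegral, lintegral_dirac]
    exact ENNReal.coe_lt_top⟩

noncomputable def gpdfnn (v : ℝ≥0) (x : ℝ) : ℝ≥0 := (gaussianPDFReal 0 v x).toNNReal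

lemma gpdfnn_meas (v : ℝ≥0) : Measurable (gpdfnn v) :=
  (measurable_gaussianPDFReal _ _).real_toNNReal

lemma gaussianReal_eq_withDensity {v : ℝ≥0} (hv : v ≠ 0) :
    gaussianReal 0 v = (volume : Measure ℝ).withDensity (fun x => (gpdfnn v x : ENNReal)) := by
  rw [gaussianReal_of_var_ne_zero _ hv]
  rfl

lemma gpdfnn_smul (v : ℝ≥0) (x : ℝ) (y : ℝ) :
    gpdfnn v x • y = gaussianPDFReal 0 v x * y := by
  rw [NNReal.smul_def, gpdfnn, smul_eq_mul, Real.coe_toNNReal _ (gaussianPDFReal_nonneg _ _ _)]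

lemma gpdf_eq (v : ℝ≥0) (x : ℝ) :
    gaussianPDFReal 0 v x = (√(2 * π * v))⁻¹ * Real.exp (-(2*(v:ℝ))⁻¹ * x ^ 2) := by
  simp only [gaussianPDFReal, sub_zero]
  congr 2
  ring

lemma integrable_id_gaussian (v : ℝ≥0) : Integrable (fun x : ℝ => x) (gaussianReal 0 v) := by
  by_cases hv : v = 0
  · rw [hv, gaussianReal_zero_var]
    exact integrable_dirac0 (by fun_prop)
  · have hvpos : 0 < (v : ℝ) := by positivity
    rw [gaussianReal_eq_withDensity hv,
      integrable_withDensity_iff_integrable_smul (gpdfnn_meas v)]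
    have : (fun x : ℝ => gpdfnn v x • x)
        = fun x : ℝ => (√(2 * π * v))⁻¹ * (x * Real.exp (-(2*(v:ℝ))⁻¹ * x ^ 2)) := by
      funext x; rw [gpdfnn_smul, gpdf_eq]; ring
    rw [this]
    exact (integrable_mul_exp_neg_mul_sq (by positivity)).const_mul _

lemma integrable_sq_gaussian (v : ℝ≥0) : Integrable (fun x : ℝ => x * x) (gaussianReal 0 v) := by
  by_cases hv : v = 0
  · rw [hv, gaussianReal_zero_var]
    exact integrable_dirac0 (by fun_prop)
  · have hvpos : 0 < (v : ℝ) := by positivity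
    rw [gaussianReal_eq_withDensity hv,
      integrable_withDensity_iff_integrable_smul (gpdfnn_meas v)]
    have : (fun x : ℝ => gpdfnn v x • (x * x))
        = fun x : ℝ => (√(2 * π * v))⁻¹ * (x ^ 2 * Real.exp (-(2*(v:ℝ))⁻¹ * x ^ 2)) := by
      funext x; rw [gpdfnn_smul, gpdf_eq]; ring
    rw [this]
    have hx2 : Integrable (fun x : ℝ => x ^ 2 * Real.exp (-(2*(v:ℝ))⁻¹ * x ^ 2)) := by
      have := integrable_rpow_mul_exp_neg_mul_sq (b := (2*(v:ℝ))⁻¹) (by positivity)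
        (s := 2) (by norm_num)
      simpa [Real.rpow_two] using this
    exact hx2.const_mul _

lemma integral_id_gaussian (v : ℝ≥0) : ∫ x, x ∂(gaussianReal 0 v) = 0 := by
  by_cases hv : v = 0
  · rw [hv, gaussianReal_zero_var, integral_dirac]
  · have hvpos : 0 < (v : ℝ) := by positivity
    rw [gaussianReal_eq_withDensity hv, integral_withDensity_eq_integral_smul (gpdfnn_meas v)]
    have : (fun x : ℝ => gpdfnn v x • x)
        = fun x : ℝ => (√(2 * π * v))⁻¹ * (x * Real.exp (-(2*(v:ℝ))⁻¹ * x ^ 2)) := by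
      funext x; rw [gpdfnn_smul, gpdf_eq]; ring
    rw [this, integral_const_mul, mul_exp_int (by positivity), mul_zero]

lemma integral_sq_gaussian (v : ℝ≥0) : ∫ x, x * x ∂(gaussianReal 0 v) = (v : ℝ) := by
  by_cases hv : v = 0
  · rw [hv, gaussianReal_zero_var, integral_dirac]; simp
  · have hvpos : 0 < (v : ℝ) := by positivity
    rw [gaussianReal_eq_withDensity hv, integral_withDensity_eq_integral_smul (gpdfnn_meas v)]
    have : (fun x : ℝ => gpdfnn v x • (x * x))
        = fun x : ℝ => (√(2 * π * v))⁻¹ * (x ^ 2 * Real.exp (-(2*(v:ℝ))⁻¹ * x ^ 2)) := by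
      funext x; rw [gpdfnn_smul, gpdf_eq]; ring
    rw [this, integral_const_mul, sq_mul_exp_int (by positivity)]
    have h1 : (2 * (2*(v:ℝ))⁻¹)⁻¹ = (v : ℝ) := by field_simp
    have h2 : π / (2*(v:ℝ))⁻¹ = 2 * π * v := by field_simp
    rw [h1, h2]
    have h3 : √(2 * π * v) ≠ 0 := by positivity
    field_simp



end AuxGauss

section AuxMatrix

lemma aux_hsInner_eq {n m' : Type*} [Fintype n] [Fintype m'] (A B : Matrix n m' ℂ) :
    hsInner A B = ∑ a, ∑ b, (starRingEnd ℂ) (A a b) * B a b := by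
  rw [hsInner, Matrix.trace]
  simp only [Matrix.diag_apply, Matrix.mul_apply, Matrix.conjTranspose_apply, RCLike.star_def]
  exact Finset.sum_comm

lemma aux_trace_expand {d m k : ℕ} {Ω : Type*} (g : Fin k × Fin d × Fin m → Ω → ℝ)
    (K : Matrix (Fin d) (Fin d) ℂ) (i j : Fin k) (ω : Ω) :
    ((gmat g i ω)ᴴ * K * gmat g j ω).trace
      = ∑ t : Fin m × Fin d × Fin d,
          (g (i, t.2.1, t.1) ω : ℂ) * K t.2.1 t.2.2 * (g (j, t.2.2, t.1) ω : ℂ) := by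
  rw [Matrix.trace]
  simp only [Matrix.diag_apply, Matrix.mul_apply, Matrix.conjTranspose_apply, gmat,
    RCLike.star_def, Complex.conj_ofReal, Finset.sum_mul, Fintype.sum_prod_type]
  exact Finset.sum_congr rfl fun c _ => Finset.sum_comm

lemma aux_integral_ofReal {α : Type*} [MeasurableSpace α] (μ : Measure α) (f : α → ℝ) :
    ∫ x, (f x : ℂ) ∂μ = ((∫ x, f x ∂μ : ℝ) : ℂ) :=
  integral_ofReal

end AuxMatrix

/-- For traceless Hermitian `M, N` and `V₁,…,V_k ∈ ℂ^{d×m}` with i.i.d.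
`N(0,1/d)` entries, `E[⟨M_{V}, N_{V}⟩] = (k(k−1)m/d²)·⟨M,N⟩`. -/
theorem expectation_proj_inner {d m k : ℕ} {Ω : Type*} [MeasurableSpace Ω]
    (μ : Measure Ω) [IsProbabilityMeasure μ]
    (g : Fin k × Fin d × Fin m → Ω → ℝ)
    (hmeas : ∀ p, Measurable (g p))
    (hindep : iIndepFun g μ)
    (hgauss : ∀ p, Measure.map (g p) μ = gaussianReal 0 ((d : NNReal)⁻¹))
    (M N : Matrix (Fin d) (Fin d) ℂ)
    (hM : M.IsHermitian) (hN : N.IsHermitian)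
    (hMtr : M.trace = 0) (hNtr : N.trace = 0) :
    ∫ ω, hsInner (proj (fun i => gmat g i ω) M) (proj (fun i => gmat g i ω) N) ∂μ =
      ((k : ℂ) * ((k : ℂ) - 1) * m / (d : ℂ) ^ 2) * hsInner M N := by
  classical
  set v : NNReal := (d : NNReal)⁻¹ with hv
  have hvr : (v : ℝ) = (d : ℝ)⁻¹ := by simp [hv]
  -- moments and integrability of single variables
  have int1 : ∀ p, Integrable (g p) μ := fun p =>
    (integrable_map_measure measurable_id.aestronglyMeasurable (hmeas p).aemeasurable).mp
      (by rw [hgauss p]; exact integrable_id_gaussian v)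
  have int2 : ∀ p, Integrable (fun ω => g p ω * g p ω) μ := fun p =>
    (integrable_map_measure (measurable_id.mul measurable_id).aestronglyMeasurable
      (hmeas p).aemeasurable).mp (by rw [hgauss p]; exact integrable_sq_gaussian v)
  have mom1 : ∀ p, ∫ ω, g p ω ∂μ = 0 := by
    intro p
    have h := integral_map (μ := μ) (φ := g p) (hmeas p).aemeasurable
      (f := fun x : ℝ => x) measurable_id.aestronglyMeasurable
    rw [hgauss p, integral_id_gaussian] at h
    exact h.symm
  have mom2 : ∀ p, ∫ ω, g p ω * g p ω ∂μ = (d : ℝ)⁻¹ := by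
    intro p
    have h := integral_map (μ := μ) (φ := g p) (hmeas p).aemeasurable
      (f := fun x : ℝ => x * x) (measurable_id.mul measurable_id).aestronglyMeasurable
    rw [hgauss p, integral_sq_gaussian, hvr] at h
    exact h.symm
  -- pairs
  have pairInt : ∀ p q, Integrable (fun ω => g p ω * g q ω) μ := by
    intro p q
    by_cases hpq : p = q
    · subst hpq; exact int2 p
    · exact (hindep.indepFun hpq).integrable_mul (int1 p) (int1 q)
  have pairEq : ∀ p q, ∫ ω, g p ω * g q ω ∂μ = if p = q then (d : ℝ)⁻¹ else 0 := by
    intro p q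
    by_cases hpq : p = q
    · subst hpq; rw [if_pos rfl]; exact mom2 p
    · rw [if_neg hpq]
      have h := (hindep.indepFun hpq).integral_mul_eq_mul_integral
        (int1 p).aestronglyMeasurable (int1 q).aestronglyMeasurable
      have e : g p * g q = fun ω => g p ω * g q ω := rfl
      rw [e] at h
      rw [h, mom1 p, zero_mul]
  -- quadruples with distinct groups
  have quadIndep : ∀ p₁ p₂ q₁ q₂ : Fin k × Fin d × Fin m, p₁.1 ≠ q₁.1 → p₂.1 = p₁.1 →
      q₂.1 = q₁.1 → IndepFun (g p₁ * g p₂) (g q₁ * g q₂) μ := by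
    intro p₁ p₂ q₁ q₂ h hp hq
    refine hindep.indepFun_mul_mul hmeas p₁ p₂ q₁ q₂ ?_ ?_ ?_ ?_
    · exact fun hc => h (by rw [hc])
    · exact fun hc => h (by rw [hc, hq])
    · exact fun hc => h (by rw [← hp, hc])
    · exact fun hc => h (by rw [← hp, hc, hq])
  have quadInt : ∀ p₁ p₂ q₁ q₂ : Fin k × Fin d × Fin m, p₁.1 ≠ q₁.1 → p₂.1 = p₁.1 →
      q₂.1 = q₁.1 → Integrable (fun ω => (g p₁ ω * g p₂ ω) * (g q₁ ω * g q₂ ω)) μ := by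
    intro p₁ p₂ q₁ q₂ h hp hq
    exact (quadIndep p₁ p₂ q₁ q₂ h hp hq).integrable_mul (pairInt p₁ p₂) (pairInt q₁ q₂)
  have quadEq : ∀ p₁ p₂ q₁ q₂ : Fin k × Fin d × Fin m, p₁.1 ≠ q₁.1 → p₂.1 = p₁.1 →
      q₂.1 = q₁.1 → ∫ ω, (g p₁ ω * g p₂ ω) * (g q₁ ω * g q₂ ω) ∂μ
        = (if p₁ = p₂ then (d : ℝ)⁻¹ else 0) * (if q₁ = q₂ then (d : ℝ)⁻¹ else 0) := by
    intro p₁ p₂ q₁ q₂ h hp hq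
    have h2 := (quadIndep p₁ p₂ q₁ q₂ h hp hq).integral_mul_eq_mul_integral
      (pairInt p₁ p₂).aestronglyMeasurable (pairInt q₁ q₂).aestronglyMeasurable
    have e : (g p₁ * g p₂) * (g q₁ * g q₂)
        = fun ω => (g p₁ ω * g p₂ ω) * (g q₁ ω * g q₂ ω) := rfl
    have e1 : g p₁ * g p₂ = fun ω => g p₁ ω * g p₂ ω := rfl
    have e2 : g q₁ * g q₂ = fun ω => g q₁ ω * g q₂ ω := rfl
    rw [e, e1, e2] at h2
    rw [h2, pairEq p₁ p₂, pairEq q₁ q₂]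
  -- the key computation for a fixed pair i ≠ j
  set C : ℂ := (m : ℂ) * ((d : ℂ) ^ 2)⁻¹ * hsInner M N with hC
  have keyInt : ∀ i j : Fin k, i ≠ j →
      Integrable (fun ω => (starRingEnd ℂ) (((gmat g i ω)ᴴ * M * gmat g j ω).trace)
        * ((gmat g i ω)ᴴ * N * gmat g j ω).trace) μ := by
    intro i j hij
    have hfun : (fun ω => (starRingEnd ℂ) (((gmat g i ω)ᴴ * M * gmat g j ω).trace)
        * ((gmat g i ω)ᴴ * N * gmat g j ω).trace)
        = fun ω => ∑ t : Fin m × Fin d × Fin d, ∑ s : Fin m × Fin d × Fin d,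
            (starRingEnd ℂ) (M t.2.1 t.2.2) * N s.2.1 s.2.2 *
            (((g (i, t.2.1, t.1) ω * g (i, s.2.1, s.1) ω)
              * (g (j, t.2.2, t.1) ω * g (j, s.2.2, s.1) ω) : ℝ) : ℂ) := by
      funext ω
      rw [aux_trace_expand g M i j ω, aux_trace_expand g N i j ω, map_sum, Finset.sum_mul_sum]
      refine Finset.sum_congr rfl fun t _ => Finset.sum_congr rfl fun s _ => ?_
      simp only [_root_.map_mul, Complex.conj_ofReal]
      push_cast
      ring
    rw [hfun]
    refine integrable_finset_sum _ fun t _ => integrable_finset_sum _ fun s _ => ?_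
    exact ((quadInt (i, t.2.1, t.1) (i, s.2.1, s.1) (j, t.2.2, t.1) (j, s.2.2, s.1) (by simpa using hij) rfl rfl).ofReal).const_mul _
  have keyVal : ∀ i j : Fin k, i ≠ j →
      ∫ ω, (starRingEnd ℂ) (((gmat g i ω)ᴴ * M * gmat g j ω).trace)
        * ((gmat g i ω)ᴴ * N * gmat g j ω).trace ∂μ = C := by
    intro i j hij
    have hfun : (fun ω => (starRingEnd ℂ) (((gmat g i ω)ᴴ * M * gmat g j ω).trace)
        * ((gmat g i ω)ᴴ * N * gmat g j ω).trace)
        = fun ω => ∑ t : Fin m × Fin d × Fin d, ∑ s : Fin m × Fin d × Fin d,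
            (starRingEnd ℂ) (M t.2.1 t.2.2) * N s.2.1 s.2.2 *
            (((g (i, t.2.1, t.1) ω * g (i, s.2.1, s.1) ω)
              * (g (j, t.2.2, t.1) ω * g (j, s.2.2, s.1) ω) : ℝ) : ℂ) := by
      funext ω
      rw [aux_trace_expand g M i j ω, aux_trace_expand g N i j ω, map_sum, Finset.sum_mul_sum]
      refine Finset.sum_congr rfl fun t _ => Finset.sum_congr rfl fun s _ => ?_
      simp only [_root_.map_mul, Complex.conj_ofReal]
      push_cast
      ring
    rw [hfun, integral_finset_sum _ (fun t _ => integrable_finset_sum _ fun s _ =>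
      ((quadInt (i, t.2.1, t.1) (i, s.2.1, s.1) (j, t.2.2, t.1) (j, s.2.2, s.1)
        (by simpa using hij) rfl rfl).ofReal).const_mul _)]
    have hterm : ∀ t s : Fin m × Fin d × Fin d,
        ∫ ω, (starRingEnd ℂ) (M t.2.1 t.2.2) * N s.2.1 s.2.2 *
            (((g (i, t.2.1, t.1) ω * g (i, s.2.1, s.1) ω)
              * (g (j, t.2.2, t.1) ω * g (j, s.2.2, s.1) ω) : ℝ) : ℂ) ∂μ
          = if s = t then (starRingEnd ℂ) (M t.2.1 t.2.2) * N t.2.1 t.2.2 * ((d : ℂ) ^ 2)⁻¹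
            else 0 := by
      intro t s
      rw [integral_const_mul, aux_integral_ofReal,
        quadEq (i, t.2.1, t.1) (i, s.2.1, s.1) (j, t.2.2, t.1) (j, s.2.2, s.1)
          (by simpa using hij) rfl rfl]
      by_cases hst : s = t
      · subst hst
        rw [if_pos rfl, if_pos rfl, if_pos rfl]
        push_cast
        ring
      · rw [if_neg hst]
        rcases t with ⟨tc, ta, tb⟩
        rcases s with ⟨sc, sa, sb⟩
        by_cases h1 : ta = sa ∧ tc = sc
        · have h2 : ¬(tb = sb ∧ tc = sc) := by
            rintro ⟨h3, h4⟩
            refine hst ?_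
            simp only [Prod.ext_iff]
            exact ⟨h4.symm, h1.1.symm, h3.symm⟩
          have hc2 : ¬((j, tb, tc) = ((j, sb, sc) : Fin k × Fin d × Fin m)) := by
            simp only [Prod.ext_iff, ne_eq]
            tauto
          simp [hc2]
        · have hc1 : ¬((i, ta, tc) = ((i, sa, sc) : Fin k × Fin d × Fin m)) := by
            simp only [Prod.ext_iff, ne_eq]
            tauto
          simp [hc1]
    rw [Finset.sum_congr rfl fun t _ => integral_finset_sum Finset.univ fun s _ =>
      ((quadInt (i, t.2.1, t.1) (i, s.2.1, s.1) (j, t.2.2, t.1) (j, s.2.2, s.1)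
        (by simpa using hij) rfl rfl).ofReal).const_mul _]
    rw [Finset.sum_congr rfl fun t _ => Finset.sum_congr rfl fun s _ => hterm t s]
    rw [Finset.sum_congr rfl fun t (_ : t ∈ Finset.univ) =>
      Finset.sum_ite_eq' Finset.univ t
        (fun _ => (starRingEnd ℂ) (M t.2.1 t.2.2) * N t.2.1 t.2.2 * ((d : ℂ) ^ 2)⁻¹)]
    simp only [Finset.mem_univ, if_true]
    rw [hC, aux_hsInner_eq M N]
    simp only [Fintype.sum_prod_type]
    rw [Finset.sum_const, Finset.card_univ, Fintype.card_fin, nsmul_eq_mul]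
    simp only [← Finset.sum_mul]
    ring
  -- expand the full inner product
  have expand0 : ∀ ω : Ω,
      hsInner (proj (fun i => gmat g i ω) M) (proj (fun i => gmat g i ω) N)
        = ∑ j : Fin k, ∑ i : Fin k, (if i = j then 0 else
            (starRingEnd ℂ) (((gmat g i ω)ᴴ * M * gmat g j ω).trace)
              * ((gmat g i ω)ᴴ * N * gmat g j ω).trace) := by
    intro ω
    rw [hsInner, Matrix.trace]
    refine Finset.sum_congr rfl fun j _ => ?_
    rw [Matrix.diag_apply, Matrix.mul_apply]
    refine Finset.sum_congr rfl fun i _ => ?_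
    rw [Matrix.conjTranspose_apply, proj, proj]
    by_cases hij : i = j
    · simp [hij]
    · simp [hij, RCLike.star_def]
  have hint : ∀ (j i : Fin k), Integrable (fun ω => (if i = j then (0:ℂ) else
      (starRingEnd ℂ) (((gmat g i ω)ᴴ * M * gmat g j ω).trace)
        * ((gmat g i ω)ᴴ * N * gmat g j ω).trace)) μ := by
    intro j i
    by_cases hij : i = j
    · simp only [hij, if_true]
      exact integrable_zero _ _ _
    · simp only [hij, if_false]
      exact keyInt i j hij
  calc ∫ ω, hsInner (proj (fun i => gmat g i ω) M) (proj (fun i => gmat g i ω) N) ∂μ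
      = ∫ ω, ∑ j : Fin k, ∑ i : Fin k, (if i = j then 0 else
          (starRingEnd ℂ) (((gmat g i ω)ᴴ * M * gmat g j ω).trace)
            * ((gmat g i ω)ᴴ * N * gmat g j ω).trace) ∂μ := by
        exact integral_congr_ae (Filter.Eventually.of_forall expand0)
    _ = ∑ j : Fin k, ∑ i : Fin k, ∫ ω, (if i = j then 0 else
          (starRingEnd ℂ) (((gmat g i ω)ᴴ * M * gmat g j ω).trace)
            * ((gmat g i ω)ᴴ * N * gmat g j ω).trace) ∂μ := by
        rw [integral_finset_sum _ fun j _ => integrable_finset_sum _ fun i _ => hint j i]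
        exact Finset.sum_congr rfl fun j _ => integral_finset_sum _ fun i _ => hint j i
    _ = ∑ j : Fin k, ∑ i : Fin k, (if i = j then 0 else C) := by
        refine Finset.sum_congr rfl fun j _ => Finset.sum_congr rfl fun i _ => ?_
        by_cases hij : i = j
        · simp [hij]
        · simp only [hij, if_false]
          exact keyVal i j hij
    _ = ∑ _j : Fin k, (((k : ℂ) - 1) * C) := by
        refine Finset.sum_congr rfl fun j _ => ?_
        calc ∑ i : Fin k, (if i = j then (0:ℂ) else C)
            = ∑ i : Fin k, (C - if i = j then C else 0) := by
              refine Finset.sum_congr rfl fun i _ => by split_ifs <;> ring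
          _ = (∑ _i : Fin k, C) - ∑ i : Fin k, (if i = j then C else 0) :=
              Finset.sum_sub_distrib _ _
          _ = (k : ℂ) * C - C := by
              rw [Finset.sum_const, Finset.card_univ, Fintype.card_fin, nsmul_eq_mul,
                Finset.sum_ite_eq' Finset.univ j (fun _ => C)]
              simp
          _ = ((k : ℂ) - 1) * C := by ring
    _ = ((k : ℂ) * ((k : ℂ) - 1) * m / (d : ℂ) ^ 2) * hsInner M N := by
        rw [Finset.sum_const, Finset.card_univ, Fintype.card_fin, nsmul_eq_mul, hC]
        ring
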